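/- Let G be a connected maximal nontraceable graph and let S be the set of vertices v of G such that either v has degree 1, or v has degree 2 and some neighbour of v has degree at most 2. Then every connected component H of the subgraph of G induced by S has at most two vertices, all vertices of H are pairwise adjacent, and there is exactly one vertex y of G outside H that is adjacent to a vertex of H; moreover, deleting y disconnects G (y is a cut-vertex of G). -/

import Mathlib

open SimpleGraph

/-- A graph is traceable if it has a Hamiltonian path, i.e. a path containing
all the vertices of the graph. -/
def Traceable {V : Type*} (G : SimpleGraph V) : Prop :=
  ∃ (u v : V) (p : G.Walk u v), p.IsPath ∧ ∀ w, w ∈ p.support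

/-- A graph is maximal nontraceable if it is not traceable, but adding any edge
of the complement produces a traceable graph. -/
def MaxNontraceable {V : Type*} (G : SimpleGraph V) : Prop :=
  ¬ Traceable G ∧ ∀ u v : V, u ≠ v → ¬ G.Adj u v → Traceable (G ⊔ SimpleGraph.edge u v)
section Helpers

variable {V : Type*}

private lemma chain'_mono_mem' {α : Type*} {R S : α → α → Prop} :
    ∀ (l : List α), (∀ a ∈ l, ∀ b ∈ l, R a b → S a b) → List.Chain' R l → List.Chain' S l
  | [], _, _ => List.isChain_nil
  | [a], _, _ => List.isChain_singleton a
  | a :: b :: t, h, hc => by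
      simp only [List.Chain', List.isChain_cons_cons] at hc ⊢
      exact ⟨h a (by simp) b (by simp) hc.1,
        chain'_mono_mem' (b :: t) (fun x hx y hy => h x (List.mem_cons_of_mem _ hx)
          y (List.mem_cons_of_mem _ hy)) hc.2⟩

private lemma exists_bad_pair' {α : Type*} {R R' : α → α → Prop} :
    ∀ (l : List α), List.Chain' R' l → ¬ List.Chain' R l →
      ∃ (l1 : List α) (a b : α) (l2 : List α),
        l = l1 ++ a :: b :: l2 ∧ R' a b ∧ ¬ R a b
  | [], _, hn => absurd List.isChain_nil hn
  | [a], _, hn => absurd (List.isChain_singleton a) hn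
  | a :: b :: t, h', hn => by
      simp only [List.Chain', List.isChain_cons_cons] at h' hn
      by_cases hab : R a b
      · obtain ⟨l1, x, y, l2, hl, h1, h2⟩ :=
          exists_bad_pair' (b :: t) h'.2 (fun hc => hn ⟨hab, hc⟩)
        exact ⟨a :: l1, x, y, l2, by rw [List.cons_append, hl], h1, h2⟩
      · exact ⟨[], a, b, t, rfl, h'.1, hab⟩

private lemma chain'_middle' {α : Type*} {R : α → α → Prop} :
    ∀ (xs : List α) {a b : α} {ys : List α}, List.Chain' R (xs ++ a :: b :: ys) → R a b
  | [], _, _, _, h => (List.isChain_cons_cons.mp h).1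
  | _ :: xs, _, _, _, h => chain'_middle' xs h.tail

private lemma walk_of_chain' (G : SimpleGraph V) :
    ∀ (xs : List V) (x : V), List.Chain' G.Adj (x :: xs) →
      ∃ (y : V) (p : G.Walk x y), p.support = x :: xs
  | [], x, _ => ⟨x, SimpleGraph.Walk.nil, rfl⟩
  | b :: t, x, h => by
      simp only [List.Chain', List.isChain_cons_cons] at h
      obtain ⟨y, p, hp⟩ := walk_of_chain' G t b h.2
      exact ⟨y, SimpleGraph.Walk.cons h.1 p, by simp [hp]⟩

private lemma traceable_of_list' (G : SimpleGraph V) (l : List V) (hne : l ≠ [])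
    (hnd : l.Nodup) (hch : List.Chain' G.Adj l) (hall : ∀ v, v ∈ l) :
    Traceable G := by
  obtain ⟨x, xs, rfl⟩ := List.exists_cons_of_ne_nil hne
  obtain ⟨y, p, hp⟩ := walk_of_chain' G xs x hch
  exact ⟨x, y, p, by rw [SimpleGraph.Walk.isPath_def, hp]; exact hnd,
    fun w => by rw [hp]; exact hall w⟩

private lemma list_of_traceable' (G : SimpleGraph V) (h : Traceable G) :
    ∃ l : List V, l.Nodup ∧ List.Chain' G.Adj l ∧ ∀ v, v ∈ l := by
  obtain ⟨u, v, p, hp, hall⟩ := h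
  exact ⟨p.support, (SimpleGraph.Walk.isPath_def p).mp hp, p.isChain_adj_support, hall⟩

private lemma closed_of_walk' {W : Type*} (G : SimpleGraph W) (A : Set W)
    (hA : ∀ x ∈ A, ∀ y, G.Adj x y → y ∈ A) :
    ∀ {u v : W} (_ : G.Walk u v), u ∈ A → v ∈ A
  | _, _, SimpleGraph.Walk.nil, hu => hu
  | _, _, SimpleGraph.Walk.cons h p, hu => closed_of_walk' G A hA p (hA _ hu _ h)

private lemma closed_of_reachable' {W : Type*} (G : SimpleGraph W) (A : Set W)
    (hA : ∀ x ∈ A, ∀ y, G.Adj x y → y ∈ A) {u v : W} (h : G.Reachable u v)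
    (hu : u ∈ A) : v ∈ A :=
  h.elim fun p => closed_of_walk' G A hA p hu

/-- The core rerouting argument: if `v2` has neighbour set exactly `{v1, y2}`,
`v1 y2` is a non-edge, and there is a "hamiltonian list" for `G` plus the edge
`v1 y2` in which `v1` immediately precedes `y2`, then `G` is traceable. -/
private lemma core' {G : SimpleGraph V} (hnt : ¬ Traceable G)
    {v2 v1 y2 : V} (hnb : G.neighborSet v2 = {v1, y2}) (h12 : v1 ≠ y2)
    (l1 l2 : List V)
    (hnd : (l1 ++ v1 :: y2 :: l2).Nodup)
    (hch : List.Chain' (fun x y => G.Adj x y ∨ (x = v1 ∧ y = y2) ∨ (x = y2 ∧ y = v1))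
      (l1 ++ v1 :: y2 :: l2))
    (hall : ∀ v, v ∈ l1 ++ v1 :: y2 :: l2) : False := by
  set R' : V → V → Prop :=
    fun x y => G.Adj x y ∨ (x = v1 ∧ y = y2) ∨ (x = y2 ∧ y = v1) with hR'
  have hadj1 : G.Adj v2 v1 := by
    have : v1 ∈ G.neighborSet v2 := by rw [hnb]; exact Set.mem_insert _ _
    exact this
  have hadj2 : G.Adj v2 y2 := by
    have : y2 ∈ G.neighborSet v2 := by rw [hnb]; simp
    exact this
  have h21 : v2 ≠ v1 := hadj1.ne
  have h22 : v2 ≠ y2 := hadj2.ne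
  -- basic nodup consequences
  have hnd0 := hnd
  rw [List.nodup_append] at hnd
  obtain ⟨hnd1, hnd2, hdisj⟩ := hnd
  have hv1l1 : v1 ∉ l1 := fun h => hdisj _ h _ (by simp) rfl
  have hy2l1 : y2 ∉ l1 := fun h => hdisj _ h _ (by simp) rfl
  rw [List.nodup_cons] at hnd2
  have hv1l2 : v1 ∉ y2 :: l2 := hnd2.1
  rw [List.nodup_cons] at hnd2
  have hy2l2 : y2 ∉ l2 := hnd2.2.1
  -- a membership-restricted upgrade from R' to G.Adj
  have upg : ∀ (m : List V), v1 ∉ m → List.Chain' R' m → List.Chain' G.Adj m := by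
    intro m hm hcm
    refine chain'_mono_mem' m ?_ hcm
    rintro a ha b hb (h | ⟨rfl, rfl⟩ | ⟨rfl, rfl⟩)
    · exact h
    · exact absurd ha hm
    · exact absurd hb hm
  -- neighbour-in-R' facts
  have nbrR : ∀ x, R' v2 x → x = v1 ∨ x = y2 := by
    rintro x (h | ⟨h, _⟩ | ⟨h, _⟩)
    · have : x ∈ G.neighborSet v2 := h
      rw [hnb] at this; exact this
    · exact absurd h h21
    · exact absurd h h22
  have nbrL : ∀ x, R' x v2 → x = v1 ∨ x = y2 := by
    rintro x (h | ⟨_, h⟩ | ⟨_, h⟩)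
    · have : x ∈ G.neighborSet v2 := h.symm
      rw [hnb] at this; exact this
    · exact absurd h h22
    · exact absurd h h21
  have memof : ∀ {x : V} {m : List V}, x ∈ m.getLast? → x ∈ m := by
    intro x m hx
    obtain ⟨h, rfl⟩ := List.mem_getLast?_eq_getLast hx
    exact List.getLast_mem h
  have hv2mem := hall v2
  rw [List.mem_append, List.mem_cons, List.mem_cons] at hv2mem
  rcases hv2mem with hmem | hmem | hmem | hmem
  · -- v2 ∈ l1
    obtain ⟨s, t, rfl⟩ := List.append_of_mem hmem
    -- right side of v2 must be v1, so t = []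
    have ht : t = [] := by
      cases t with
      | nil => rfl
      | cons c t' =>
        exfalso
        have hc : R' v2 c := by
          have := hch
          have heq : (s ++ v2 :: c :: t') ++ v1 :: y2 :: l2
              = s ++ v2 :: c :: (t' ++ v1 :: y2 :: l2) := by simp
          rw [heq] at this
          exact chain'_middle' s this
        have hcmem : c ∈ s ++ v2 :: c :: t' := by simp
        rcases nbrR c hc with rfl | rfl
        · exact hv1l1 hcmem
        · exact hy2l1 hcmem
    subst ht
    -- left side of v2 must be in {v1, y2}, impossible, so s = []
    have hs : s = [] := by
      rcases List.eq_nil_or_concat s with rfl | ⟨s', p, rfl⟩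
      · rfl
      · exfalso
        have hp : R' p v2 := by
          have := hch
          have heq : (s'.concat p ++ [v2]) ++ v1 :: y2 :: l2
              = s' ++ p :: v2 :: (v1 :: y2 :: l2) := by simp
          rw [heq] at this
          exact chain'_middle' s' this
        have hpmem : p ∈ s'.concat p ++ [v2] := by simp
        rcases nbrL p hp with rfl | rfl
        · exact hv1l1 hpmem
        · exact hy2l1 hpmem
    subst hs
    -- l = v2 :: v1 :: y2 :: l2; reroute to v1 :: v2 :: y2 :: l2
    apply hnt
    have hperm : ([v2] ++ v1 :: y2 :: l2).Perm (v1 :: v2 :: y2 :: l2) :=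
      List.Perm.swap v1 v2 (y2 :: l2)
    refine traceable_of_list' G (v1 :: v2 :: y2 :: l2) (by simp) (hperm.nodup hnd0) ?_ ?_
    · simp only [List.Chain', List.isChain_cons_cons]
      refine ⟨hadj1.symm, hadj2, upg _ hv1l2 ?_⟩
      exact (hch.tail).tail
    · intro w; exact hperm.mem_iff.mp (hall w)
  · exact h21 hmem
  · exact h22 hmem
  · -- v2 ∈ l2
    obtain ⟨s, t, rfl⟩ := List.append_of_mem hmem
    have hs : s = [] := by
      rcases List.eq_nil_or_concat s with rfl | ⟨s', p, rfl⟩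
      · rfl
      · exfalso
        have hp : R' p v2 := by
          have := hch
          have heq : l1 ++ v1 :: y2 :: (s'.concat p ++ v2 :: t)
              = (l1 ++ v1 :: y2 :: s') ++ p :: v2 :: t := by simp
          rw [heq] at this
          exact chain'_middle' _ this
        have hpmem : p ∈ s'.concat p ++ v2 :: t := by simp
        rcases nbrL p hp with rfl | rfl
        · exact hv1l2 (List.mem_cons_of_mem _ hpmem)
        · exact hy2l2 hpmem
    subst hs
    have ht : t = [] := by
      cases t with
      | nil => rfl
      | cons c t' =>
        exfalso
        have hc : R' v2 c := by
          have := hch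
          have heq : l1 ++ v1 :: y2 :: ([] ++ v2 :: c :: t')
              = (l1 ++ [v1, y2]) ++ v2 :: c :: t' := by simp
          rw [heq] at this
          exact chain'_middle' _ this
        have hcmem : c ∈ ([] : List V) ++ v2 :: c :: t' := by simp
        rcases nbrR c hc with rfl | rfl
        · exact hv1l2 (List.mem_cons_of_mem _ hcmem)
        · exact hy2l2 hcmem
    subst ht
    -- l = l1 ++ [v1, y2, v2]; reroute to l1 ++ [v1, v2, y2]
    apply hnt
    have hperm : (l1 ++ v1 :: y2 :: ([] ++ v2 :: [])).Perm (l1 ++ [v1, v2, y2]) := by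
      refine List.Perm.append_left l1 ?_
      simpa using List.Perm.cons v1 (List.Perm.swap v2 y2 [])
    refine traceable_of_list' G (l1 ++ [v1, v2, y2]) (by simp) (hperm.nodup hnd0) ?_ ?_
    · simp only [List.Chain', List.isChain_append]
      obtain ⟨hc1, _, hlink⟩ := List.isChain_append.mp hch
      refine ⟨upg _ hv1l1 hc1, ?_, ?_⟩
      · rw [List.isChain_cons_cons, List.isChain_cons_cons]
        exact ⟨hadj1.symm, hadj2, List.isChain_singleton _⟩
      · intro x hx y hy
        simp only [List.head?_cons, Option.mem_some_iff] at hy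
        subst hy
        have hx' : x ∈ l1 := memof hx
        rcases hlink x hx v1 (by simp) with h | ⟨rfl, h⟩ | ⟨rfl, _⟩
        · exact h
        · exact absurd h h12
        · exact absurd hx' hy2l1
    · intro w; exact hperm.mem_iff.mp (hall w)

/-- In a maximal nontraceable graph, the two neighbours of a vertex of degree 2
are adjacent. -/
private lemma lemK' {V : Type*} {G : SimpleGraph V} (hG : MaxNontraceable G)
    {v a b : V} (hab : a ≠ b) (hnb : G.neighborSet v = {a, b}) : G.Adj a b := by
  by_contra hadj
  have hT := hG.2 a b hab hadj
  obtain ⟨l, hnd, hch, hall⟩ := list_of_traceable' _ hT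
  set R' : V → V → Prop :=
    fun x y => G.Adj x y ∨ (x = a ∧ y = b) ∨ (x = b ∧ y = a) with hR'
  have hch' : List.Chain' R' l := by
    refine hch.imp ?_
    intro x y hxy
    rcases (SimpleGraph.sup_adj _ _ _ _).mp hxy with h | h
    · exact Or.inl h
    · exact Or.inr ((SimpleGraph.edge_adj a b x y).mp h).1
  by_cases hcG : List.Chain' G.Adj l
  · exact hG.1 (traceable_of_list' G l
      (List.ne_nil_of_mem (hall a)) hnd hcG hall)
  obtain ⟨l1, x, y, l2, rfl, hxy, hnxy⟩ := exists_bad_pair' l hch' hcG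
  rcases hxy with h | ⟨rfl, rfl⟩ | ⟨rfl, rfl⟩
  · exact hnxy h
  · exact core' hG.1 hnb hab l1 l2 hnd hch' hall
  · refine core' hG.1 (by rw [hnb]; exact Set.pair_comm _ _) hab.symm l1 l2 hnd ?_ hall
    refine hch'.imp ?_
    rintro x y (h | h | h)
    · exact Or.inl h
    · exact Or.inr (Or.inr h)
    · exact Or.inr (Or.inl h)

end Helpers


/-- Let S be the set of vertices of a connected MNT graph G that have degree 1, or
degree 2 with a neighbour of degree at most 2. Then every component H of the
subgraph induced by S has at most two, pairwise adjacent, vertices, and exactly one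
vertex of G outside H is adjacent to a vertex of H; moreover that vertex is a
cut-vertex of G. -/
theorem stmt_17 {V : Type*} [Fintype V] (G : SimpleGraph V)
    (hc : G.Connected) (hG : MaxNontraceable G)
    (S : Set V)
    (hS : S = {v : V | Nat.card (G.neighborSet v) = 1 ∨
      (Nat.card (G.neighborSet v) = 2 ∧
        ∃ u, G.Adj v u ∧ Nat.card (G.neighborSet u) ≤ 2)}) :
    ∀ H : (G.induce S).ConnectedComponent,
      Nat.card H.supp ≤ 2 ∧
      (∀ x ∈ Subtype.val '' H.supp, ∀ y ∈ Subtype.val '' H.supp, x ≠ y → G.Adj x y) ∧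
      ∃ y : V, y ∉ Subtype.val '' H.supp ∧
        (∃ x ∈ Subtype.val '' H.supp, G.Adj y x) ∧
        (∀ z : V, z ∉ Subtype.val '' H.supp →
          (∃ x ∈ Subtype.val '' H.supp, G.Adj z x) → z = y) ∧
        ¬ (G.induce ({y}ᶜ : Set V)).Connected := by
  classical
  -- preliminaries
  have hcard1 : ∀ x : V, Nat.card (G.neighborSet x) = 1 → ∃ w, G.neighborSet x = {w} :=
    fun x h => Set.ncard_eq_one.mp (by rw [← Nat.card_coe_set_eq]; exact h)
  have hcard2 : ∀ x : V, Nat.card (G.neighborSet x) = 2 →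
      ∃ a b, a ≠ b ∧ G.neighborSet x = {a, b} :=
    fun x h => Set.ncard_eq_two.mp (by rw [← Nat.card_coe_set_eq]; exact h)
  have hind : ∀ (s : Set V) (a b : ↥s), (G.induce s).Adj a b ↔ G.Adj a.val b.val :=
    fun s a b => by simp
  have hclosedV : ∀ (A : Set V), (∀ x ∈ A, ∀ y, G.Adj x y → y ∈ A) → A.Nonempty →
      ∀ u : V, u ∈ A := by
    intro A hA ⟨x, hx⟩ u
    exact closed_of_reachable' G A hA (hc.preconnected x u) hx
  intro H
  induction H using SimpleGraph.ConnectedComponent.ind with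
  | _ v0 =>
  set v : V := v0.val with hv
  have hv0S : v ∈ S := v0.2
  rw [hS, Set.mem_setOf_eq] at hv0S
  have hv0supp : v0 ∈ ((G.induce S).connectedComponentMk v0).supp :=
    ((G.induce S).connectedComponentMk v0).mem_supp_iff v0 |>.mpr rfl
  rcases hv0S with h1 | ⟨h2, u, hu, hud⟩
  · -- Case 1 : v has degree 1
    obtain ⟨w, hw⟩ := hcard1 v h1
    have hadjvw : G.Adj v w := by
      have : w ∈ G.neighborSet v := by rw [hw]; rfl
      exact this
    have hnbv : ∀ x, G.Adj v x → x = w := by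
      intro x hx
      have : x ∈ G.neighborSet v := hx
      rw [hw] at this; exact this
    have hvw : v ≠ w := hadjvw.ne
    -- w does not have degree 1
    have hdw1 : Nat.card (G.neighborSet w) ≠ 1 := by
      intro h
      obtain ⟨x, hx⟩ := hcard1 w h
      have hvx : v ∈ G.neighborSet w := hadjvw.symm
      rw [hx] at hvx
      subst hvx
      -- neighborSet w = {v}; then V = {v, w} and G is traceable
      have hclosed : ∀ z ∈ ({v, w} : Set V), ∀ y, G.Adj z y → y ∈ ({v, w} : Set V) := by
        intro z hz y hy
        simp only [Set.mem_insert_iff, Set.mem_singleton_iff] at hz ⊢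
        rcases hz with rfl | rfl
        · right; exact hnbv y hy
        · left
          have : y ∈ G.neighborSet z := hy
          rw [hx] at this; exact this
      have hall := hclosedV _ hclosed ⟨v, by left; rfl⟩
      refine hG.1 (traceable_of_list' G [v, w] (by simp) (by simp [hvw]) ?_ ?_)
      · simp [List.Chain', hadjvw]
      · intro z
        have hz := hall z
        simp only [Set.mem_insert_iff, Set.mem_singleton_iff] at hz
        rcases hz with rfl | rfl <;> simp
    -- w does not have degree 2
    have hdw2 : Nat.card (G.neighborSet w) ≠ 2 := by
      intro h
      obtain ⟨x, y, hxy, hxy2⟩ := hcard2 w h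
      have hvm : v ∈ G.neighborSet w := hadjvw.symm
      rw [hxy2] at hvm
      have hK := lemK' hG hxy hxy2
      rcases hvm with rfl | rfl
      · -- v = x
        have : y = w := hnbv y hK
        subst this
        have : y ∈ G.neighborSet y := by rw [hxy2]; right; rfl
        exact G.irrefl this
      · -- v = y
        have : x = w := hnbv x hK.symm
        subst this
        have : x ∈ G.neighborSet x := by rw [hxy2]; left; rfl
        exact G.irrefl this
    -- there is a neighbour c of w distinct from v
    have hc3 : ∃ c, G.Adj w c ∧ c ≠ v := by
      by_contra h
      push_neg at h
      have : G.neighborSet w = {v} := by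
        apply Set.eq_singleton_iff_unique_mem.mpr
        exact ⟨hadjvw.symm, fun c hcm => h c hcm⟩
      apply hdw1
      rw [this, Nat.card_coe_set_eq, Set.ncard_singleton]
    obtain ⟨c, hwc, hcv⟩ := hc3
    have hwS : w ∉ S := by
      rw [hS, Set.mem_setOf_eq]
      rintro (h | ⟨h, -⟩)
      · exact hdw1 h
      · exact hdw2 h
    -- the component of v0 is {v0}
    have hsupp : ∀ x0, x0 ∈ ((G.induce S).connectedComponentMk v0).supp → x0 = v0 := by
      intro x0 hx0
      rw [SimpleGraph.ConnectedComponent.mem_supp_iff] at hx0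
      have hreach : (G.induce S).Reachable v0 x0 :=
        (SimpleGraph.ConnectedComponent.eq.mp hx0).symm
      have hA : ∀ z ∈ {z : ↥S | z.val = v}, ∀ t, (G.induce S).Adj z t →
          t ∈ {z : ↥S | z.val = v} := by
        intro z hz t ht
        rw [hind] at ht
        rw [Set.mem_setOf_eq] at hz
        rw [hz] at ht
        exact absurd (hnbv t.val ht ▸ t.2) hwS
      have := closed_of_reachable' _ _ hA hreach rfl
      exact Subtype.ext this
    have himg : Subtype.val '' ((G.induce S).connectedComponentMk v0).supp = {v} := by
      apply Set.eq_singleton_iff_unique_mem.mpr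
      constructor
      · exact ⟨v0, hv0supp, rfl⟩
      · rintro x ⟨x0, hx0, rfl⟩
        rw [hsupp x0 hx0]
    refine ⟨?_, ?_, w, ?_, ?_, ?_, ?_⟩
    · have hsub : ((G.induce S).connectedComponentMk v0).supp ⊆ {v0} :=
        fun x0 hx0 => hsupp x0 hx0
      calc Nat.card ((G.induce S).connectedComponentMk v0).supp
          = (((G.induce S).connectedComponentMk v0).supp : Set ↥S).ncard :=
            Nat.card_coe_set_eq _
        _ ≤ ({v0} : Set ↥S).ncard := Set.ncard_le_ncard hsub (Set.toFinite _)
        _ ≤ 2 := by rw [Set.ncard_singleton]; omega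
    · intro x hx y hy hxy
      rw [himg] at hx hy
      rw [hx, hy] at hxy
      exact absurd rfl hxy
    · rw [himg]; exact fun h => hvw h.symm
    · exact ⟨v, by rw [himg]; rfl, hadjvw.symm⟩
    · intro z hz ⟨x, hx, hzx⟩
      rw [himg] at hx
      rw [hx] at hzx
      exact hnbv z hzx.symm
    · intro hconn
      have hvb : v ∈ ({w}ᶜ : Set V) := Set.mem_compl_singleton_iff.mpr hvw
      have hcb : c ∈ ({w}ᶜ : Set V) := Set.mem_compl_singleton_iff.mpr hwc.ne'
      have hreach := hconn.preconnected ⟨v, hvb⟩ ⟨c, hcb⟩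
      have hA : ∀ z ∈ {z : ↥({w}ᶜ : Set V) | z.val = v}, ∀ t,
          (G.induce ({w}ᶜ : Set V)).Adj z t → t ∈ {z : ↥({w}ᶜ : Set V) | z.val = v} := by
        intro z hz t ht
        rw [hind] at ht
        rw [Set.mem_setOf_eq] at hz
        rw [hz] at ht
        exact absurd (hnbv t.val ht) (Set.mem_compl_singleton_iff.mp t.2)
      have := closed_of_reachable' _ _ hA hreach rfl
      exact hcv this
  · -- Case 2 : v has degree 2 with a neighbour u of degree ≤ 2
    have hvu : v ≠ u := hu.ne
    -- u has degree exactly 2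
    obtain ⟨a, b', hab, hab2⟩ := hcard2 v h2
    have hKv := lemK' hG hab hab2
    have hum : u ∈ G.neighborSet v := hu
    rw [hab2] at hum
    -- normalize: neighborSet v = {u, b} with b ≠ u
    obtain ⟨b, hbu, hnbv, hKvb⟩ :
        ∃ b, b ≠ u ∧ G.neighborSet v = {u, b} ∧ G.Adj u b := by
      rcases hum with rfl | rfl
      · exact ⟨b', hab.symm, hab2, hKv⟩
      · exact ⟨a, hab, by rw [hab2, Set.pair_comm], hKv.symm⟩
    have hadjvb : G.Adj v b := by
      have : b ∈ G.neighborSet v := by rw [hnbv]; right; rfl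
      exact this
    have hbv : b ≠ v := hadjvb.ne'
    have hnbv' : ∀ x, G.Adj v x → x = u ∨ x = b := by
      intro x hx
      have : x ∈ G.neighborSet v := hx
      rw [hnbv] at this; exact this
    have hu1 : Nat.card (G.neighborSet u) ≠ 1 := by
      intro h
      obtain ⟨x, hx⟩ := hcard1 u h
      have hvm : v ∈ G.neighborSet u := hu.symm
      rw [hx] at hvm; subst hvm
      have : b ∈ G.neighborSet u := hKvb
      rw [hx] at this
      exact hbv this
    have hu0 : Nat.card (G.neighborSet u) ≠ 0 := by
      intro h
      rw [Nat.card_coe_set_eq] at h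
      have : v ∈ G.neighborSet u := hu.symm
      rw [Set.ncard_eq_zero (Set.toFinite _)] at h
      rw [h] at this
      exact this
    have hu2 : Nat.card (G.neighborSet u) = 2 := by omega
    -- neighborSet u = {v, b}
    have hnbu : G.neighborSet u = {v, b} := by
      obtain ⟨x, y, hxy, hxy2⟩ := hcard2 u hu2
      have hvm : v ∈ G.neighborSet u := hu.symm
      have hbm : b ∈ G.neighborSet u := hKvb
      rw [hxy2] at hvm hbm
      rcases hvm with rfl | rfl
      · rcases hbm with rfl | rfl
        · exact absurd rfl hbv
        · exact hxy2
      · rcases hbm with rfl | rfl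
        · rw [hxy2, Set.pair_comm]
        · exact absurd rfl hbv
    have hnbu' : ∀ x, G.Adj u x → x = v ∨ x = b := by
      intro x hx
      have : x ∈ G.neighborSet u := hx
      rw [hnbu] at this; exact this
    -- b has a neighbour c outside {v, u}
    have hc3 : ∃ c, G.Adj b c ∧ c ≠ v ∧ c ≠ u := by
      by_contra h
      push_neg at h
      have hclosed : ∀ z ∈ ({v, u, b} : Set V), ∀ y, G.Adj z y →
          y ∈ ({v, u, b} : Set V) := by
        intro z hz y hy
        simp only [Set.mem_insert_iff, Set.mem_singleton_iff] at hz ⊢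
        rcases hz with rfl | rfl | rfl
        · rcases hnbv' y hy with rfl | rfl
          · right; left; rfl
          · right; right; rfl
        · rcases hnbu' y hy with rfl | rfl
          · left; rfl
          · right; right; rfl
        · by_cases hyv : y = v
          · left; exact hyv
          · right; left; exact h y hy hyv
      have hall := hclosedV _ hclosed ⟨v, by left; rfl⟩
      have hub : u ≠ b := fun h => hbu h.symm
      refine hG.1 (traceable_of_list' G [u, v, b] (by simp) ?_ ?_ ?_)
      · simp [hvu.symm, hub, hbv.symm]
      · simp [List.Chain', hu.symm, hadjvb]
      · intro z
        have hz := hall z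
        simp only [Set.mem_insert_iff, Set.mem_singleton_iff] at hz
        rcases hz with rfl | rfl | rfl <;> simp
    obtain ⟨c, hbc, hcv, hcu⟩ := hc3
    -- b has degree at least 3, so b ∉ S
    have hb3 : 3 ≤ Nat.card (G.neighborSet b) := by
      rw [Nat.card_coe_set_eq]
      have hsub : ({v, u, c} : Set V) ⊆ G.neighborSet b := by
        rintro x (rfl | rfl | rfl)
        · exact hadjvb.symm
        · exact hKvb.symm
        · exact hbc
      have h3 : ({v, u, c} : Set V).ncard = 3 :=
        Set.ncard_eq_three.mpr ⟨v, u, c, hvu, fun h => hcv h.symm, fun h => hcu h.symm, rfl⟩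
      rw [← h3]
      exact Set.ncard_le_ncard hsub (Set.toFinite _)
    have hbS : b ∉ S := by
      rw [hS, Set.mem_setOf_eq]
      rintro (h | ⟨h, -⟩) <;> omega
    have huS : u ∈ S := by
      rw [hS, Set.mem_setOf_eq]
      exact Or.inr ⟨hu2, v, hu.symm, by omega⟩
    set u0 : ↥S := ⟨u, huS⟩ with hu0
    have hu0supp : u0 ∈ ((G.induce S).connectedComponentMk v0).supp := by
      rw [SimpleGraph.ConnectedComponent.mem_supp_iff]
      apply SimpleGraph.ConnectedComponent.eq.mpr
      exact ((hind S u0 v0).mpr hu.symm).reachable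
    -- the component of v0 is {v0, u0}
    have hsupp : ∀ x0, x0 ∈ ((G.induce S).connectedComponentMk v0).supp →
        x0 = v0 ∨ x0 = u0 := by
      intro x0 hx0
      rw [SimpleGraph.ConnectedComponent.mem_supp_iff] at hx0
      have hreach : (G.induce S).Reachable v0 x0 :=
        (SimpleGraph.ConnectedComponent.eq.mp hx0).symm
      have hA : ∀ z ∈ {z : ↥S | z.val = v ∨ z.val = u}, ∀ t, (G.induce S).Adj z t →
          t ∈ {z : ↥S | z.val = v ∨ z.val = u} := by
        intro z hz t ht
        rw [hind] at ht
        rw [Set.mem_setOf_eq] at hz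
        rw [Set.mem_setOf_eq]
        rcases hz with hz | hz
        · rw [hz] at ht
          rcases hnbv' t.val ht with h | h
          · right; exact h
          · exact absurd (h ▸ t.2) hbS
        · rw [hz] at ht
          rcases hnbu' t.val ht with h | h
          · left; exact h
          · exact absurd (h ▸ t.2) hbS
      have := closed_of_reachable' _ _ hA hreach (Or.inl rfl)
      rcases this with h | h
      · left; exact Subtype.ext h
      · right; exact Subtype.ext h
    have himg : Subtype.val '' ((G.induce S).connectedComponentMk v0).supp = {v, u} := by
      apply Set.eq_of_subset_of_subset
      · rintro x ⟨x0, hx0, rfl⟩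
        rcases hsupp x0 hx0 with rfl | rfl
        · left; rfl
        · right; rfl
      · rintro x (rfl | rfl)
        · exact ⟨v0, hv0supp, rfl⟩
        · exact ⟨u0, hu0supp, rfl⟩
    refine ⟨?_, ?_, b, ?_, ?_, ?_, ?_⟩
    · have hsub : ((G.induce S).connectedComponentMk v0).supp ⊆ {v0, u0} := by
        intro x0 hx0
        rcases hsupp x0 hx0 with rfl | rfl
        · left; rfl
        · right; rfl
      calc Nat.card ((G.induce S).connectedComponentMk v0).supp
          = (((G.induce S).connectedComponentMk v0).supp : Set ↥S).ncard :=
            Nat.card_coe_set_eq _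
        _ ≤ ({v0, u0} : Set ↥S).ncard := Set.ncard_le_ncard hsub (Set.toFinite _)
        _ ≤ ({u0} : Set ↥S).ncard + 1 := Set.ncard_insert_le _ _
        _ ≤ 2 := by rw [Set.ncard_singleton]
    · intro x hx y hy hxy
      rw [himg] at hx hy
      rcases hx with rfl | rfl <;> rcases hy with rfl | rfl
      · exact absurd rfl hxy
      · exact hu
      · exact hu.symm
      · exact absurd rfl hxy
    · rw [himg]
      rintro (rfl | rfl)
      · exact hbv rfl
      · exact hbu rfl
    · exact ⟨v, by rw [himg]; left; rfl, hadjvb.symm⟩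
    · intro z hz ⟨x, hx, hzx⟩
      rw [himg] at hz hx
      rcases hx with rfl | rfl
      · rcases hnbv' z hzx.symm with rfl | rfl
        · exact absurd (by right; rfl) hz
        · rfl
      · rcases hnbu' z hzx.symm with rfl | rfl
        · exact absurd (by left; rfl) hz
        · rfl
    · intro hconn
      have hvb : v ∈ ({b}ᶜ : Set V) := Set.mem_compl_singleton_iff.mpr hbv.symm
      have hcb : c ∈ ({b}ᶜ : Set V) := Set.mem_compl_singleton_iff.mpr hbc.ne'
      have hreach := hconn.preconnected ⟨v, hvb⟩ ⟨c, hcb⟩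
      have hA : ∀ z ∈ {z : ↥({b}ᶜ : Set V) | z.val = v ∨ z.val = u}, ∀ t,
          (G.induce ({b}ᶜ : Set V)).Adj z t →
          t ∈ {z : ↥({b}ᶜ : Set V) | z.val = v ∨ z.val = u} := by
        intro z hz t ht
        rw [hind] at ht
        rw [Set.mem_setOf_eq] at hz
        rw [Set.mem_setOf_eq]
        rcases hz with hz | hz
        · rw [hz] at ht
          rcases hnbv' t.val ht with h | h
          · right; exact h
          · exact absurd h (Set.mem_compl_singleton_iff.mp t.2)
        · rw [hz] at ht
          rcases hnbu' t.val ht with h | h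
          · left; exact h
          · exact absurd h (Set.mem_compl_singleton_iff.mp t.2)
      have := closed_of_reachable' _ _ hA hreach (Or.inl rfl)
      rcases this with h | h
      · exact hcv h
      · exact hcu h
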